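/- Let a, b, c > 0, T > 0, and let v = (v₁, v₂) : ℝ → ℝ² be a non-constant C¹ function with v(t + T) = v(t) for all t, satisfying the Van der Pol oscillator equations v₁'(t) = a v₂(t) and v₂'(t) = −b v₁(t) + c(1 − v₁(t)²)v₂(t) for all t. Then for every t, the 3×3 matrix ∫_t^{t+T} φ(v(s))^T φ(v(s)) ds is positive definite; consequently, the function s ↦ φ(v(s))^T is persistently exciting. -/

import Mathlib

open Matrix Filter MeasureTheory

/-- Entrywise interval integral of a matrix-valued function. -/
noncomputable def matIntegral {k k' : ℕ} (f : ℝ → Matrix (Fin k) (Fin k') ℝ) (a b : ℝ) :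
    Matrix (Fin k) (Fin k') ℝ :=
  Matrix.of fun i j => ∫ s in a..b, f s i j

/-- A matrix-valued signal `f` is persistently exciting if
`(1/T₀) ∫_t^{t+T₀} f(s) f(s)ᵀ ds ⪰ ε I` for all `t ≥ t₀`. -/
def PersistentlyExciting {k k' : ℕ} (f : ℝ → Matrix (Fin k) (Fin k') ℝ) : Prop :=
  ∃ ε : ℝ, 0 < ε ∧ ∃ t₀ : ℝ, 0 ≤ t₀ ∧ ∃ T₀ : ℝ, 0 < T₀ ∧ ∀ t, t₀ ≤ t →
    ((1 / T₀) • matIntegral (fun s => f s * (f s)ᵀ) t (t + T₀) -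
      ε • (1 : Matrix (Fin k) (Fin k) ℝ)).PosSemidef

/-- The regressor matrix of the Van der Pol oscillator:
`φ(v) = [[v₂, 0, 0], [0, −v₁, (1 − v₁²) v₂]]`, so that the right-hand side of the
oscillator equals `φ(v) · col(a,b,c)`. -/
noncomputable def vdpPhi (w : ℝ × ℝ) : Matrix (Fin 2) (Fin 3) ℝ :=
  Matrix.of ![![w.2, 0, 0], ![0, -w.1, (1 - w.1 ^ 2) * w.2]]

lemma periodic_zero_of_integral_zero {T : ℝ} (hT : 0 < T) {g : ℝ → ℝ}
    (hg : Continuous g) (hper : Function.Periodic g T) (hnn : ∀ s, 0 ≤ g s)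
    {t : ℝ} (hint : (∫ s in t..(t+T), g s) = 0) : ∀ s, g s = 0 := by
  have hle : t ≤ t + T := by linarith
  have hInt : IntegrableOn g (Set.Ioc t (t+T)) volume := hg.integrableOn_Ioc
  have h0 : ∫ s in Set.Ioc t (t+T), g s = 0 := by
    rw [← intervalIntegral.integral_of_le hle]; exact hint
  have hae : g =ᵐ[volume.restrict (Set.Ioc t (t+T))] 0 := by
    rw [← MeasureTheory.setIntegral_eq_zero_iff_of_nonneg_ae
      (Filter.Eventually.of_forall hnn) hInt]
    exact h0
  have hIoo : Set.EqOn g 0 (Set.Ioo t (t+T)) := by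
    intro s₀ hs₀
    by_contra hne
    have hpos : 0 < g s₀ := lt_of_le_of_ne (hnn s₀) (Ne.symm hne)
    have hopen : IsOpen ({x | 0 < g x} ∩ Set.Ioo t (t+T)) :=
      (isOpen_lt continuous_const hg).inter isOpen_Ioo
    have hne2 : ({x | 0 < g x} ∩ Set.Ioo t (t+T)).Nonempty := ⟨s₀, hpos, hs₀⟩
    have hmeas : 0 < volume ({x | 0 < g x} ∩ Set.Ioo t (t+T)) := hopen.measure_pos _ hne2
    have : volume ({x | 0 < g x} ∩ Set.Ioo t (t+T)) = 0 := by
      have h' := (ae_restrict_iff' measurableSet_Ioc).mp hae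
      rw [Filter.eventually_iff, mem_ae_iff] at h'
      refine measure_mono_null ?_ h'
      rintro x ⟨hx1, hx2⟩
      simp only [Set.mem_compl_iff, Set.mem_setOf_eq, Pi.zero_apply]
      exact fun h => absurd (h ⟨hx2.1, hx2.2.le⟩) (ne_of_gt hx1)
    exact absurd this (ne_of_gt hmeas)
  have hIcc : Set.EqOn g 0 (Set.Icc t (t+T)) := by
    have := hIoo.closure hg continuous_const
    rwa [closure_Ioo (by linarith : t ≠ t + T)] at this
  intro s
  have hm := toIcoMod_mem_Ico hT t s
  have : g (toIcoMod hT t s) = g s := by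
    rw [← self_sub_toIcoDiv_zsmul hT t s]
    exact hper.sub_zsmul_eq _
  rw [← this]
  exact hIcc ⟨hm.1, hm.2.le⟩

lemma vdp_vanish (a b c T : ℝ) (ha : 0 < a) (hb : 0 < b) (hc : 0 < c) (hT : 0 < T)
    (v₁ v₂ : ℝ → ℝ) (hv₁ : ContDiff ℝ 1 v₁) (hv₂ : ContDiff ℝ 1 v₂)
    (hnonconst : ∃ t s : ℝ, (v₁ t, v₂ t) ≠ (v₁ s, v₂ s))
    (hper : ∀ t, v₁ (t + T) = v₁ t ∧ v₂ (t + T) = v₂ t)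
    (hode1 : ∀ t, HasDerivAt v₁ (a * v₂ t) t)
    (x0 x1 x2 : ℝ)
    (hc0 : ∀ s, x0 * v₂ s = 0)
    (hc1 : ∀ s, -(x1 * v₁ s) + x2 * ((1 - v₁ s ^ 2) * v₂ s) = 0) :
    x0 = 0 ∧ x1 = 0 ∧ x2 = 0 := by
  -- v₂ is not identically zero
  have hv2ne : ¬ (∀ s, v₂ s = 0) := by
    intro h
    have hconst : ∀ t s : ℝ, v₁ t = v₁ s := by
      intro t s
      refine is_const_of_deriv_eq_zero (fun u => (hode1 u).differentiableAt) (fun u => ?_) t s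
      have := hode1 u
      rw [h u, mul_zero] at this
      exact this.deriv
    obtain ⟨t, s, hne⟩ := hnonconst
    exact hne (by rw [Prod.ext_iff]; exact ⟨hconst t s, by rw [h t, h s]⟩)
  -- v₁ is not identically zero
  have hv1ne : ¬ (∀ s, v₁ s = 0) := by
    intro h
    apply hv2ne
    intro s
    have h1 : HasDerivAt v₁ 0 s := by
      have : v₁ = fun _ => (0:ℝ) := funext h
      rw [this]; exact hasDerivAt_const s 0
    have := (hode1 s).unique h1
    exact (mul_eq_zero.mp this).resolve_left (ne_of_gt ha)
  -- x0 = 0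
  have hx0 : x0 = 0 := by
    push_neg at hv2ne
    obtain ⟨s₀, hs₀⟩ := hv2ne
    have := hc0 s₀
    exact (mul_eq_zero.mp this).resolve_right hs₀
  -- integral identity : ∫ (1-v₁²) v₁ v₂ over a period = 0
  have hF : ∀ s : ℝ, HasDerivAt (fun u => (v₁ u ^ 2 / 2 - v₁ u ^ 4 / 4) / a)
      ((1 - v₁ s ^ 2) * v₁ s * v₂ s) s := by
    intro s
    have h := hode1 s
    have h2 : HasDerivAt (fun u => (v₁ u ^ 2 / 2 - v₁ u ^ 4 / 4) / a)
        ((((2:ℕ) * v₁ s ^ 1 * (a * v₂ s)) / 2 - ((4:ℕ) * v₁ s ^ 3 * (a * v₂ s)) / 4) / a) s :=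
      (((h.pow 2).div_const 2).sub ((h.pow 4).div_const 4)).div_const a
    convert h2 using 1
    have ha' := ne_of_gt ha
    field_simp
    ring
  have hcont1 : Continuous v₁ := hv₁.continuous
  have hcont2 : Continuous v₂ := hv₂.continuous
  have hI : (∫ s in (0:ℝ)..(0+T), (1 - v₁ s ^ 2) * v₁ s * v₂ s) = 0 := by
    rw [intervalIntegral.integral_eq_sub_of_hasDerivAt (fun u _ => hF u) ?_]
    · rw [(hper 0).1]; ring
    · exact (((continuous_const.sub (hcont1.pow 2)).mul hcont1).mul hcont2).intervalIntegrable _ _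
  -- x1 = 0
  have hsq : (∫ s in (0:ℝ)..(0+T), v₁ s ^ 2) ≠ 0 := by
    intro h0
    apply hv1ne
    intro s
    have := periodic_zero_of_integral_zero hT (by fun_prop)
      (fun u => by simp [(hper u).1]) (fun u => sq_nonneg _) h0 s
    exact pow_eq_zero_iff (n := 2) (by norm_num) |>.mp this
  have hx1 : x1 = 0 := by
    have hkey : x1 * ∫ s in (0:ℝ)..(0+T), v₁ s ^ 2
        = x2 * ∫ s in (0:ℝ)..(0+T), (1 - v₁ s ^ 2) * v₁ s * v₂ s := by
      rw [← intervalIntegral.integral_const_mul, ← intervalIntegral.integral_const_mul]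
      apply intervalIntegral.integral_congr
      intro s _
      have := hc1 s
      linear_combination (-(v₁ s)) * this
    rw [hI, mul_zero] at hkey
    exact (mul_eq_zero.mp hkey).resolve_right hsq
  refine ⟨hx0, hx1, ?_⟩
  -- x2 = 0
  by_contra hx2
  have hcon : ∀ s, (1 - v₁ s ^ 2) * v₂ s = 0 := by
    intro s
    have h0 := hc1 s
    rw [hx1] at h0
    have h2 : x2 * ((1 - v₁ s ^ 2) * v₂ s) = 0 := by linarith
    exact (mul_eq_zero.mp h2).resolve_left hx2
  push_neg at hv2ne
  obtain ⟨s₀, hs₀⟩ := hv2ne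
  have hev : (fun y => v₁ y ^ 2) =ᶠ[nhds s₀] fun _ => (1:ℝ) := by
    have hne : ∀ᶠ y in nhds s₀, v₂ y ≠ 0 := (hcont2.continuousAt).eventually_ne hs₀
    filter_upwards [hne] with y hy
    have := hcon y
    rcases mul_eq_zero.mp this with h | h
    · linarith
    · exact absurd h hy
  have hd0 : HasDerivAt (fun y => v₁ y ^ 2) 0 s₀ :=
    (hasDerivAt_const s₀ (1:ℝ)).congr_of_eventuallyEq hev
  have hd1 : HasDerivAt (fun y => v₁ y ^ 2) ((2:ℕ) * v₁ s₀ ^ 1 * (a * v₂ s₀)) s₀ :=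
    (hode1 s₀).pow 2
  have huniq := hd1.unique hd0
  have h1 : v₁ s₀ ^ 2 = 1 := hev.self_of_nhds
  have : v₁ s₀ = 0 := by
    have ha' := ne_of_gt ha
    simp at huniq
    rcases huniq with h | h | h
    · exact h
    · exact absurd h ha'
    · exact absurd h hs₀
  rw [this] at h1
  norm_num at h1

lemma quad_integral {k : ℕ} (f : ℝ → Matrix (Fin k) (Fin k) ℝ) (t u : ℝ)
    (hf : ∀ i j, IntervalIntegrable (fun s => f s i j) volume t u) (x : Fin k → ℝ) :
    (∫ s in t..u, x ⬝ᵥ (f s *ᵥ x)) = x ⬝ᵥ (matIntegral f t u *ᵥ x) := by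
  simp only [dotProduct, mulVec, matIntegral, Matrix.of_apply]
  rw [intervalIntegral.integral_finset_sum (f := fun i s => x i * ∑ j, f s i j * x j)
    (fun i _ => by simpa [Finset.sum_apply] using (IntervalIntegrable.sum
      (f := fun j s => f s i j * x j) Finset.univ
      (fun j _ => (hf i j).mul_const (x j))).const_mul (x i))]
  refine Finset.sum_congr rfl fun i _ => ?_
  rw [intervalIntegral.integral_const_mul]
  congr 1
  rw [intervalIntegral.integral_finset_sum (f := fun j s => f s i j * x j)
    (fun j _ => (hf i j).mul_const (x j))]
  exact Finset.sum_congr rfl fun j _ => intervalIntegral.integral_mul_const _ _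

theorem stmt_13 (a b c T : ℝ) (ha : 0 < a) (hb : 0 < b) (hc : 0 < c) (hT : 0 < T)
    (v₁ v₂ : ℝ → ℝ) (hv₁ : ContDiff ℝ 1 v₁) (hv₂ : ContDiff ℝ 1 v₂)
    (hnonconst : ∃ t s : ℝ, (v₁ t, v₂ t) ≠ (v₁ s, v₂ s))
    (hper : ∀ t, v₁ (t + T) = v₁ t ∧ v₂ (t + T) = v₂ t)
    (hode1 : ∀ t, HasDerivAt v₁ (a * v₂ t) t)
    (hode2 : ∀ t, HasDerivAt v₂ (-b * v₁ t + c * (1 - v₁ t ^ 2) * v₂ t) t) :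
    (∀ t : ℝ,
      (matIntegral (fun s => (vdpPhi (v₁ s, v₂ s))ᵀ * vdpPhi (v₁ s, v₂ s)) t (t + T)).PosDef)
    ∧ PersistentlyExciting (fun s => (vdpPhi (v₁ s, v₂ s))ᵀ) := by
  have hcont1 : Continuous v₁ := hv₁.continuous
  have hcont2 : Continuous v₂ := hv₂.continuous
  set F : ℝ → Matrix (Fin 3) (Fin 3) ℝ :=
    fun s => (vdpPhi (v₁ s, v₂ s))ᵀ * vdpPhi (v₁ s, v₂ s) with hF
  have hFcont : ∀ i j, Continuous fun s => F s i j := by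
    intro i j
    fin_cases i <;> fin_cases j <;>
      · simp [hF, vdpPhi, Matrix.mul_apply, Fin.sum_univ_succ, Matrix.cons_val_succ]
        fun_prop
  have hFint : ∀ (t u : ℝ) (i j : Fin 3), IntervalIntegrable (fun s => F s i j) volume t u :=
    fun t u i j => (hFcont i j).intervalIntegrable _ _
  have hquad : ∀ (s : ℝ) (x : Fin 3 → ℝ),
      x ⬝ᵥ (F s *ᵥ x)
        = (v₂ s * x 0)^2 + (-(v₁ s) * x 1 + (1 - v₁ s ^ 2) * v₂ s * x 2)^2 := by
    intro s x
    simp [hF, vdpPhi, Matrix.mul_apply, mulVec, dotProduct, Fin.sum_univ_succ,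
      Matrix.cons_val_succ]
    ring
  have hsym : ∀ (s : ℝ) (i j : Fin 3), F s j i = F s i j := by
    intro s i j
    simp only [hF, Matrix.mul_apply, Matrix.transpose_apply]
    exact Finset.sum_congr rfl fun k _ => mul_comm _ _
  have hHerm : ∀ t u : ℝ, (matIntegral F t u).IsHermitian := by
    intro t u
    refine Matrix.IsHermitian.ext fun i j => ?_
    simp only [matIntegral, Matrix.of_apply, star_trivial]
    exact intervalIntegral.integral_congr fun s _ => hsym s i j
  have hPD : ∀ t : ℝ, (matIntegral F t (t + T)).PosDef := by
    intro t
    refine Matrix.PosDef.of_dotProduct_mulVec_pos (hHerm t (t+T)) ?_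
    intro x hx
    have hstar : star x = x := by ext i; simp
    rw [hstar, ← quad_integral F t (t+T) (hFint t (t+T)) x]
    set g : ℝ → ℝ :=
      fun s => (v₂ s * x 0)^2 + (-(v₁ s) * x 1 + (1 - v₁ s ^ 2) * v₂ s * x 2)^2 with hg
    have hgeq : (∫ s in t..t+T, x ⬝ᵥ (F s *ᵥ x)) = ∫ s in t..t+T, g s :=
      intervalIntegral.integral_congr fun s _ => hquad s x
    rw [hgeq]
    have hgc : Continuous g := by fun_prop
    have hgper : Function.Periodic g T := by
      intro u; simp only [hg, (hper u).1, (hper u).2]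
    have hgnn : ∀ s, 0 ≤ g s := fun s => add_nonneg (sq_nonneg _) (sq_nonneg _)
    have hnn : 0 ≤ ∫ s in t..t+T, g s :=
      intervalIntegral.integral_nonneg (by linarith) (fun u _ => hgnn u)
    rcases hnn.lt_or_eq with h | h
    · exact h
    · exfalso
      have hzero := periodic_zero_of_integral_zero hT hgc hgper hgnn h.symm
      have e0 : ∀ s, x 0 * v₂ s = 0 := by
        intro s
        have hz := hzero s
        simp only [hg] at hz
        have h1 : (v₂ s * x 0)^2 = 0 := by
          nlinarith [sq_nonneg (v₂ s * x 0),
            sq_nonneg (-(v₁ s) * x 1 + (1 - v₁ s ^ 2) * v₂ s * x 2)]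
        have := pow_eq_zero_iff (n := 2) (by norm_num) |>.mp h1
        linarith [this, mul_comm (v₂ s) (x 0)]
      have e1 : ∀ s, -(x 1 * v₁ s) + x 2 * ((1 - v₁ s ^ 2) * v₂ s) = 0 := by
        intro s
        have hz := hzero s
        simp only [hg] at hz
        have h1 : (-(v₁ s) * x 1 + (1 - v₁ s ^ 2) * v₂ s * x 2)^2 = 0 := by
          nlinarith [sq_nonneg (v₂ s * x 0),
            sq_nonneg (-(v₁ s) * x 1 + (1 - v₁ s ^ 2) * v₂ s * x 2)]
        have := pow_eq_zero_iff (n := 2) (by norm_num) |>.mp h1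
        linarith [this]
      obtain ⟨h0, h1', h2⟩ := vdp_vanish a b c T ha hb hc hT v₁ v₂ hv₁ hv₂ hnonconst hper
        hode1 (x 0) (x 1) (x 2) e0 e1
      apply hx
      ext i
      fin_cases i <;> simpa
  refine ⟨hPD, ?_⟩
  set M : Matrix (Fin 3) (Fin 3) ℝ := matIntegral F 0 (0 + T) with hM
  have hMPD : M.PosDef := hPD 0
  have hAll : ∀ t : ℝ, matIntegral
      (fun s => (vdpPhi (v₁ s, v₂ s))ᵀ * ((vdpPhi (v₁ s, v₂ s))ᵀ)ᵀ) t (t + T) = M := by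
    intro t
    have hFF : (fun s => (vdpPhi (v₁ s, v₂ s))ᵀ * ((vdpPhi (v₁ s, v₂ s))ᵀ)ᵀ) = F := by
      funext s; rw [Matrix.transpose_transpose]
    rw [hFF, hM]
    ext i j
    show (∫ s in t..(t+T), F s i j) = ∫ s in (0:ℝ)..((0:ℝ)+T), F s i j
    have hperij : Function.Periodic (fun s => F s i j) T := by
      intro u; simp only [hF, (hper u).1, (hper u).2]
    exact hperij.intervalIntegral_add_eq t 0
  have hQcont : Continuous fun x : Fin 3 → ℝ => x ⬝ᵥ (M *ᵥ x) := by
    simp only [dotProduct, mulVec]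
    fun_prop
  have hsne : (Metric.sphere (0 : Fin 3 → ℝ) 1).Nonempty :=
    NormedSpace.sphere_nonempty.mpr zero_le_one
  obtain ⟨z, hzmem, hzmin⟩ :=
    (isCompact_sphere (0 : Fin 3 → ℝ) 1).exists_isMinOn hsne hQcont.continuousOn
  have hznorm : ‖z‖ = 1 := by simpa using hzmem
  have hzne : z ≠ 0 := by
    intro h; rw [h] at hznorm; simp at hznorm
  have hstar3 : ∀ x : Fin 3 → ℝ, star x = x := fun x => by ext i; simp
  have hm : 0 < z ⬝ᵥ (M *ᵥ z) := by
    have := hMPD.dotProduct_mulVec_pos hzne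
    rwa [hstar3 z] at this
  set m := z ⬝ᵥ (M *ᵥ z) with hmdef
  have hlow : ∀ x : Fin 3 → ℝ, m * ‖x‖^2 ≤ x ⬝ᵥ (M *ᵥ x) := by
    intro x
    rcases eq_or_ne x 0 with rfl | hx
    · simp
    · have hnx : 0 < ‖x‖ := norm_pos_iff.mpr hx
      set y : Fin 3 → ℝ := ‖x‖⁻¹ • x with hy
      have hymem : y ∈ Metric.sphere (0 : Fin 3 → ℝ) 1 := by
        simp [hy, norm_smul, abs_of_nonneg (inv_nonneg.mpr hnx.le),
          inv_mul_cancel₀ (ne_of_gt hnx)]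
      have h1 : m ≤ y ⬝ᵥ (M *ᵥ y) := hzmin hymem
      have h3 : x ⬝ᵥ (M *ᵥ x) = ‖x‖^2 * (y ⬝ᵥ (M *ᵥ y)) := by
        rw [hy, Matrix.mulVec_smul, smul_dotProduct, dotProduct_smul]
        field_simp
        rw [smul_eq_mul, smul_eq_mul, ← mul_assoc, ← mul_assoc, sq, mul_assoc ‖x‖, mul_one_div_cancel (ne_of_gt hnx), mul_one, mul_one_div_cancel (ne_of_gt hnx), one_mul]
      rw [h3]
      nlinarith [h1, sq_nonneg ‖x‖]
  have hsum : ∀ x : Fin 3 → ℝ, x ⬝ᵥ x ≤ 3 * ‖x‖^2 := by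
    intro x
    have hbd : ∀ i, x i * x i ≤ ‖x‖^2 := by
      intro i
      have h := norm_le_pi_norm x i
      have habs : |x i| ≤ ‖x‖ := by simpa using h
      nlinarith [abs_nonneg (x i), norm_nonneg x, sq_abs (x i)]
    calc x ⬝ᵥ x = ∑ i, x i * x i := rfl
    _ ≤ ∑ _i : Fin 3, ‖x‖^2 := Finset.sum_le_sum (fun i _ => hbd i)
    _ = 3 * ‖x‖^2 := by simp [Finset.sum_const]
  refine ⟨m / (3 * T), div_pos hm (by positivity), 0, le_refl 0, T, hT, ?_⟩
  intro t _
  rw [hAll t]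
  refine Matrix.PosSemidef.of_dotProduct_mulVec_nonneg ?_ ?_
  · show ((1/T) • M - (m/(3*T)) • (1 : Matrix (Fin 3) (Fin 3) ℝ))ᴴ = _
    rw [Matrix.conjTranspose_sub, Matrix.conjTranspose_smul, Matrix.conjTranspose_smul,
      Matrix.conjTranspose_one, hMPD.1.eq]
    simp
  · intro x
    rw [hstar3 x, Matrix.sub_mulVec, Matrix.smul_mulVec, Matrix.smul_mulVec,
      Matrix.one_mulVec, dotProduct_sub, dotProduct_smul, dotProduct_smul,
      smul_eq_mul, smul_eq_mul, sub_nonneg]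
    have key : m * (x ⬝ᵥ x) ≤ 3 * (x ⬝ᵥ (M *ᵥ x)) := by
      nlinarith [hlow x, hsum x, hm.le, sq_nonneg ‖x‖]
    have heq : 1/T * (x ⬝ᵥ (M *ᵥ x)) - m/(3*T) * (x ⬝ᵥ x)
        = (3 * (x ⬝ᵥ (M *ᵥ x)) - m * (x ⬝ᵥ x)) / (3*T) := by
      field_simp
    have : 0 ≤ (3 * (x ⬝ᵥ (M *ᵥ x)) - m * (x ⬝ᵥ x)) / (3*T) :=
      div_nonneg (by linarith) (by positivity)
    linarith [heq ▸ this]
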